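/- For every natural number n, 2·∑_{k=0}^{n} C(2n,k)² = C(4n,2n) + C(2n,n)², where C(m,k) denotes the binomial coefficient; equivalently, 2·∑_{k=0}^{n-1} C(2n,k)² = C(4n,2n) − C(2n,n)² for n ≥ 1. -/

import Mathlib

open Finset

lemma vander_sq (n : ℕ) :
    ∑ i ∈ range (2 * n + 1), (Nat.choose (2 * n) i) ^ 2 = Nat.choose (4 * n) (2 * n) := by
  have h := Nat.add_choose_eq (2 * n) (2 * n) (2 * n)
  rw [show 2 * n + 2 * n = 4 * n by ring] at h
  rw [h, Finset.Nat.sum_antidiagonal_eq_sum_range_succ_mk]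
  refine Finset.sum_congr rfl fun i hi => ?_
  rw [mem_range] at hi
  simp only [sq]
  congr 1
  exact (Nat.choose_symm (by omega)).symm

lemma fold_sym (n : ℕ) :
    ∑ i ∈ range (2 * n + 1), (Nat.choose (2 * n) i) ^ 2 + (Nat.choose (2 * n) n) ^ 2 =
      2 * ∑ k ∈ range (n + 1), (Nat.choose (2 * n) k) ^ 2 := by
  have hsplit : ∑ i ∈ range (2 * n + 1), (Nat.choose (2 * n) i) ^ 2 =
      ∑ i ∈ range (n + 1), (Nat.choose (2 * n) i) ^ 2 +
      ∑ i ∈ range n, (Nat.choose (2 * n) (n + 1 + i)) ^ 2 := by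
    rw [show 2 * n + 1 = (n + 1) + n by ring, Finset.sum_range_add]
  have hsym : ∑ i ∈ range n, (Nat.choose (2 * n) (n + 1 + i)) ^ 2 =
      ∑ i ∈ range n, (Nat.choose (2 * n) i) ^ 2 := by
    rw [← Finset.sum_range_reflect (fun i => (Nat.choose (2 * n) i) ^ 2) n]
    refine Finset.sum_congr rfl fun i hi => ?_
    rw [mem_range] at hi
    congr 1
    rw [show n - 1 - i = 2 * n - (n + 1 + i) by omega]
    exact (Nat.choose_symm (by omega)).symm
  rw [hsplit, hsym, Finset.sum_range_succ, two_mul]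
  ring

/-- The binomial coefficient identity (Gould (3.68), OEIS A036910):
`2·∑_{k=0}^{n} C(2n,k)² = C(4n,2n) + C(2n,n)²`. -/
theorem sum_sq_binomial_identity (n : ℕ) :
    2 * ∑ k ∈ Finset.range (n + 1), (Nat.choose (2 * n) k) ^ 2 =
      Nat.choose (4 * n) (2 * n) + (Nat.choose (2 * n) n) ^ 2 := by
  rw [← fold_sym, vander_sq]
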